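/- Any set of pairwise unbiased unit weighing matrices of order 3 and weight 3 has at most 3 elements, and this bound is attained: there exist 3 pairwise unbiased unit Hadamard matrices of order 3 with entries third roots of unity. -/

import Mathlib

open Matrix

def IsUnitWeighing {n : ℕ} (w : ℕ) (W : Matrix (Fin n) (Fin n) ℂ) : Prop :=
  (∀ i j, W i j = 0 ∨ ‖W i j‖ = 1) ∧ W * Wᴴ = (w : ℂ) • 1

def Unbiased {n : ℕ} (w : ℕ) (H K : Matrix (Fin n) (Fin n) ℂ) : Prop :=
  ∃ L, IsUnitWeighing w L ∧ H * Kᴴ = (Real.sqrt w : ℂ) • L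

/-! ### Auxiliary facts about the primitive cube root of unity -/

noncomputable def om : ℂ := ⟨-1/2, Real.sqrt 3 / 2⟩

lemma hom : om^2 + om + 1 = 0 := by
  have h : Real.sqrt 3 * Real.sqrt 3 = 3 := Real.mul_self_sqrt (by norm_num)
  apply Complex.ext <;> simp [om, pow_two, Complex.mul_re, Complex.mul_im] <;> nlinarith [h]
lemma om3 : om ^ 3 = 1 := by linear_combination (om - 1) * hom
lemma om4 : om ^ 4 = om := by linear_combination (om ^ 2 - om) * hom
lemma om5 : om ^ 5 = om ^ 2 := by linear_combination (om ^ 3 - om ^ 2) * hom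
lemma om6 : om ^ 6 = 1 := by linear_combination (om ^ 4 - om ^ 3 + om - 1) * hom
lemma om7 : om ^ 7 = om := by linear_combination (om ^ 5 - om ^ 4 + om ^ 2 - om) * hom
lemma om8 : om ^ 8 = om ^ 2 := by linear_combination (om ^ 6 - om ^ 5 + om ^ 3 - om ^ 2) * hom
lemma hconj : (starRingEnd ℂ) om = om ^ 2 := by
  have h : Real.sqrt 3 * Real.sqrt 3 = 3 := Real.mul_self_sqrt (by norm_num)
  apply Complex.ext <;> simp [om, pow_two, Complex.mul_re, Complex.mul_im] <;> nlinarith [h]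
lemma habs_om : ‖om‖ = 1 := by
  have h : Real.sqrt 3 * Real.sqrt 3 = 3 := Real.mul_self_sqrt (by norm_num)
  have h2 : Complex.normSq om = 1 := by simp [Complex.normSq, om]; nlinarith [h]
  simp [Complex.norm_def, h2]

/-! ### The three mutually unbiased Hadamard matrices -/

noncomputable def Hm : Fin 3 → Matrix (Fin 3) (Fin 3) ℂ :=
  fun t => Matrix.of fun i j => om ^ ((t.val * j.val * j.val + i.val * j.val) % 3)

set_option maxHeartbeats 16000000 in
lemma hHorth : ∀ t, Hm t * (Hm t)ᴴ = (3 : ℂ) • 1 := by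
  intro t
  ext a b
  fin_cases t <;> fin_cases a <;> fin_cases b <;>
    simp only [Matrix.mul_apply, Matrix.conjTranspose_apply, Fin.sum_univ_three, Hm,
      Matrix.of_apply, Matrix.one_apply, Matrix.smul_apply, star_pow, Complex.star_def,
      map_pow, hconj] <;>
    norm_num [← pow_mul, ← pow_add, om3, om4, om5, om6, om7, om8, hconj, Fin.ext_iff] <;>
    (try ring_nf) <;> (try simp only [om3, om4, om5, om6, om7, om8]) <;>
    first
    | ring1
    | linear_combination hom
    | linear_combination (2:ℂ) * hom
    | linear_combination (3:ℂ) * hom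
    | linear_combination (-1:ℂ) * hom
    | linear_combination (-2:ℂ) * hom
    | linear_combination (-3:ℂ) * hom
    | linear_combination om * hom
    | linear_combination (om + 1) * hom
    | linear_combination (om - 1) * hom
    | linear_combination ((2:ℂ)*om - 2) * hom
    | linear_combination ((2:ℂ)*om + 2) * hom
    | linear_combination ((2:ℂ)*om + 1) * hom
    | linear_combination ((2:ℂ)*om - 1) * hom
    | linear_combination ((-2:ℂ)*om - 2) * hom
    | linear_combination ((-2:ℂ)*om + 2) * hom
    | linear_combination ((-1:ℂ)*om + 1) * hom
    | linear_combination ((-1:ℂ)*om - 1) * hom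
    | linear_combination ((3:ℂ)*om - 3) * hom
    | linear_combination ((3:ℂ)*om + 3) * hom

set_option maxHeartbeats 16000000 in
lemma hGauss : ∀ s t a b : Fin 3, s ≠ t →
    ((Hm s * (Hm t)ᴴ) a b) * (starRingEnd ℂ) ((Hm s * (Hm t)ᴴ) a b) = 3 := by
  intro s t a b hst
  fin_cases s <;> fin_cases t <;> simp_all <;> fin_cases a <;> fin_cases b <;>
    simp only [Matrix.mul_apply, Matrix.conjTranspose_apply, Fin.sum_univ_three, Hm,
      Matrix.of_apply, star_pow, Complex.star_def, map_add, _root_.map_mul, map_pow, hconj,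
      Complex.conj_conj] <;>
    norm_num [← pow_mul, ← pow_add, om3, om4, om5, om6, om7, om8, hconj, Complex.conj_conj,
      map_add, _root_.map_mul, map_pow] <;>
    (try ring_nf) <;> (try simp only [om3, om4, om5, om6, om7, om8]) <;>
    first
    | ring1
    | linear_combination ((2:ℂ)) * hom
    | linear_combination ((3:ℂ)) * hom
    | linear_combination ((4:ℂ)) * hom
    | linear_combination ((5:ℂ)) * hom
    | linear_combination ((6:ℂ)) * hom
    | linear_combination ((1:ℂ)) * hom
    | linear_combination ((-1:ℂ)) * hom
    | linear_combination ((-2:ℂ)) * hom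
    | linear_combination ((-3:ℂ)) * hom
    | linear_combination ((-4:ℂ)) * hom
    | linear_combination ((1:ℂ)*om + 2) * hom
    | linear_combination ((1:ℂ)*om + 3) * hom
    | linear_combination ((2:ℂ)*om + 2) * hom
    | linear_combination ((2:ℂ)*om + 3) * hom
    | linear_combination ((3:ℂ)*om + 2) * hom
    | linear_combination ((-1:ℂ)*om + 2) * hom
    | linear_combination ((-2:ℂ)*om + 2) * hom

lemma sqrt3_sq : ((Real.sqrt 3 : ℝ) : ℂ) * ((Real.sqrt 3 : ℝ) : ℂ) = 3 := by
  rw [← Complex.ofReal_mul, Real.mul_self_sqrt (by norm_num)]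
  norm_num

lemma sqrt3_ne : ((Real.sqrt 3 : ℝ) : ℂ) ≠ 0 :=
  Complex.ofReal_ne_zero.mpr (by positivity)

/-- from `A * Aᴴ = 3 • 1` deduce `Aᴴ * A = 3 • 1` -/
lemma flip_unitary (A : Matrix (Fin 3) (Fin 3) ℂ) (h : A * Aᴴ = (3:ℂ) • 1) :
    Aᴴ * A = (3:ℂ) • 1 := by
  have h1 : A * ((3:ℂ)⁻¹ • Aᴴ) = 1 := by
    rw [Matrix.mul_smul, h, smul_smul]
    norm_num
  have h2 : ((3:ℂ)⁻¹ • Aᴴ) * A = 1 := mul_eq_one_comm.mp h1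
  have h4 : Aᴴ * A = (3:ℂ) • (((3:ℂ)⁻¹ • Aᴴ) * A) := by
    rw [Matrix.smul_mul, smul_smul]
    try norm_num
  rw [h4, h2]

lemma unit_weighing_Hm (t : Fin 3) : IsUnitWeighing 3 (Hm t) := by
  constructor
  · intro i j
    right
    simp only [Hm, Matrix.of_apply, norm_pow, habs_om, one_pow]
  · have := hHorth t
    rw [this]
    norm_num

lemma unbiased_Hm (s t : Fin 3) (hst : s ≠ t) : Unbiased 3 (Hm s) (Hm t) := by
  have hcast : ((Real.sqrt ((3:ℕ):ℝ) : ℝ) : ℂ) = ((Real.sqrt 3 : ℝ) : ℂ) := by norm_num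
  refine ⟨((Real.sqrt 3 : ℝ) : ℂ)⁻¹ • (Hm s * (Hm t)ᴴ), ⟨?_, ?_⟩, ?_⟩
  · intro i j
    right
    have hg := hGauss s t i j hst
    rw [Complex.mul_conj] at hg
    have hns : Complex.normSq ((Hm s * (Hm t)ᴴ) i j) = 3 := by exact_mod_cast hg
    have habs : ‖(Hm s * (Hm t)ᴴ) i j‖ = Real.sqrt 3 := by
      rw [Complex.norm_def, hns]
    rw [Matrix.smul_apply, smul_eq_mul, norm_mul, norm_inv, habs,
      Complex.norm_real, Real.norm_of_nonneg (Real.sqrt_nonneg 3),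
      inv_mul_cancel₀ (by positivity)]
  · have hflip := flip_unitary (Hm t) (hHorth t)
    have hcc : star (((Real.sqrt 3 : ℝ) : ℂ)⁻¹) = ((Real.sqrt 3 : ℝ) : ℂ)⁻¹ := by
      rw [Complex.star_def, map_inv₀, Complex.conj_ofReal]
    rw [Matrix.conjTranspose_smul, Matrix.conjTranspose_mul, Matrix.conjTranspose_conjTranspose,
      hcc, Matrix.smul_mul, Matrix.mul_smul, smul_smul]
    have hassoc : Hm s * (Hm t)ᴴ * (Hm t * (Hm s)ᴴ) = Hm s * ((Hm t)ᴴ * Hm t) * (Hm s)ᴴ := by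
      rw [Matrix.mul_assoc, Matrix.mul_assoc, Matrix.mul_assoc]
    rw [hassoc, hflip, Matrix.mul_smul, Matrix.mul_one, Matrix.smul_mul, hHorth s, smul_smul,
      smul_smul]
    have hval : ((Real.sqrt 3 : ℝ) : ℂ)⁻¹ * ((Real.sqrt 3 : ℝ) : ℂ)⁻¹ * 3 * 3 = ((3:ℕ):ℂ) := by
      have h3 : ((Real.sqrt 3 : ℝ) : ℂ) * ((Real.sqrt 3 : ℝ) : ℂ) = 3 := sqrt3_sq
      have hne := sqrt3_ne
      push_cast
      field_simp
      linear_combination -h3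
    rw [hval]
  · rw [hcast, smul_smul, mul_inv_cancel₀ sqrt3_ne, one_smul]

/-! ### Upper bound: at most 4 mutually unbiased bases in dimension 3 -/

section MubBound

variable {M : ℕ}

noncomputable def proj (v : Fin 3 → ℂ) : Matrix (Fin 3) (Fin 3) ℂ :=
  (3:ℂ)⁻¹ • Matrix.of (fun i j => v i * (starRingEnd ℂ) (v j))

noncomputable def qmat (v : Fin 3 → ℂ) : Matrix (Fin 3) (Fin 3) ℂ :=
  proj v - (3:ℂ)⁻¹ • 1

lemma trace_proj_mul (v w : Fin 3 → ℂ) :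
    Matrix.trace (proj v * proj w) =
      (3:ℂ)⁻¹ * (3:ℂ)⁻¹ * ((∑ j, v j * (starRingEnd ℂ) (w j)) *
        (∑ j, (starRingEnd ℂ) (v j) * w j)) := by
  simp only [proj, Matrix.smul_mul, Matrix.mul_smul, smul_smul, Matrix.trace,
    Matrix.diag_apply, Matrix.smul_apply, Matrix.mul_apply, Matrix.of_apply,
    Fin.sum_univ_three, smul_eq_mul]
  ring

lemma trace_proj (v : Fin 3 → ℂ) :
    Matrix.trace (proj v) = (3:ℂ)⁻¹ * (∑ j, v j * (starRingEnd ℂ) (v j)) := by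
  simp only [proj, Matrix.trace, Matrix.diag_apply, Matrix.smul_apply, Matrix.of_apply,
    Fin.sum_univ_three, smul_eq_mul]
  ring

lemma trace_qmat (v : Fin 3 → ℂ) (h : ∑ j, v j * (starRingEnd ℂ) (v j) = 3) :
    Matrix.trace (qmat v) = 0 := by
  simp only [qmat, Matrix.trace_sub, Matrix.trace_smul, Matrix.trace_one, trace_proj, h,
    smul_eq_mul]
  norm_num

lemma trace_qmat_mul (v w : Fin 3 → ℂ)
    (hv : ∑ j, v j * (starRingEnd ℂ) (v j) = 3)
    (hw : ∑ j, w j * (starRingEnd ℂ) (w j) = 3) :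
    Matrix.trace (qmat v * qmat w) =
      (3:ℂ)⁻¹ * (3:ℂ)⁻¹ * ((∑ j, v j * (starRingEnd ℂ) (w j)) *
        (∑ j, (starRingEnd ℂ) (v j) * w j)) - (3:ℂ)⁻¹ := by
  simp only [qmat, sub_mul, mul_sub, Matrix.smul_mul, Matrix.mul_smul, Matrix.one_mul,
    Matrix.mul_one, Matrix.trace_sub, Matrix.trace_smul, Matrix.trace_one, smul_eq_mul,
    smul_smul, trace_proj_mul, trace_proj, hv, hw, Fintype.card_fin, Nat.cast_ofNat]
  ring

end MubBound

lemma ker_trace_finrank :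
    Module.finrank ℂ (LinearMap.ker (Matrix.traceLinearMap (Fin 3) ℂ ℂ)) = 8 := by
  have h := (Matrix.traceLinearMap (Fin 3) ℂ ℂ).finrank_range_add_finrank_ker
  have hsurj : LinearMap.range (Matrix.traceLinearMap (Fin 3) ℂ ℂ) = ⊤ := by
    rw [LinearMap.range_eq_top]
    intro c
    exact ⟨Matrix.diagonal (fun i => if i = 0 then c else 0), by
      simp [Matrix.traceLinearMap, Matrix.trace_diagonal]⟩
  rw [hsurj] at h
  have hdom : Module.finrank ℂ (Matrix (Fin 3) (Fin 3) ℂ) = 9 := by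
    rw [Module.finrank_matrix]; simp
  have htop : Module.finrank ℂ (⊤ : Submodule ℂ ℂ) = 1 := by
    rw [finrank_top]; simp
  rw [hdom, htop] at h
  omega

/-- The mutually-unbiased-bases bound in dimension 3 (unnormalised formulation). -/
lemma mub_bound (M : ℕ) (B : Fin M → Fin 3 → Fin 3 → ℂ)
    (horth : ∀ t a b, (∑ j, B t a j * (starRingEnd ℂ) (B t b j)) =
      if a = b then 3 else 0)
    (hunb : ∀ s t a b, s ≠ t →
      (∑ j, B s a j * (starRingEnd ℂ) (B t b j)) *
      (∑ j, (starRingEnd ℂ) (B s a j) * (B t b j)) = 3) :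
    M ≤ 4 := by
  classical
  set K := LinearMap.ker (Matrix.traceLinearMap (Fin 3) ℂ ℂ) with hK
  have hdiag : ∀ t a, ∑ j, B t a j * (starRingEnd ℂ) (B t a j) = 3 := by
    intro t a; simpa using horth t a a
  -- the traceless projector differences
  set e2 : Fin 2 → Fin 3 := fun a => ⟨a.val, by omega⟩ with he2
  have he2inj : ∀ a b : Fin 2, e2 a = e2 b → a = b := by
    intro a b h
    apply Fin.ext
    simpa [he2, Fin.ext_iff] using h
  -- key trace values
  have hQQ : ∀ s t : Fin M, ∀ a b : Fin 3,
      Matrix.trace (qmat (B s a) * qmat (B t b)) =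
        (if s = t then (if a = b then (1:ℂ) else 0) else (3:ℂ)⁻¹) - (3:ℂ)⁻¹ := by
    intro s t a b
    rw [trace_qmat_mul (B s a) (B t b) (hdiag s a) (hdiag t b)]
    by_cases hst : s = t
    · subst hst
      have h2 : ∑ j, (starRingEnd ℂ) (B s a j) * (B s b j) =
          if b = a then 3 else 0 := by
        have := horth s b a
        rw [← this]
        rw [Fin.sum_univ_three, Fin.sum_univ_three]
        ring
      rw [horth s a b, h2]
      by_cases hab : a = b
      · subst hab; simp; try ring
      · simp [hab, Ne.symm hab]; try ring
    · have := hunb s t a b hst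
      rw [this]
      simp [hst]
      try ring
  have hQ0 : ∀ t a, Matrix.trace (qmat (B t a)) = 0 := fun t a => trace_qmat _ (hdiag t a)
  -- family in the kernel of trace
  let q : Fin M × Fin 2 → K := fun p =>
    ⟨qmat (B p.1 (e2 p.2)), by
      rw [hK, LinearMap.mem_ker]
      exact hQ0 p.1 (e2 p.2)⟩
  have hli : LinearIndependent ℂ q := by
    rw [Fintype.linearIndependent_iff]
    intro g hg
    have hg' : ∑ p : Fin M × Fin 2, g p • qmat (B p.1 (e2 p.2)) = 0 := by
      have := congrArg (Submodule.subtype K) hg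
      simpa [map_sum] using this
    have E : ∀ (s : Fin M) (c : Fin 2),
        ∑ p : Fin M × Fin 2, g p * Matrix.trace (qmat (B p.1 (e2 p.2)) * qmat (B s (e2 c))) = 0 := by
      intro s c
      have h1 := congrArg (fun A => Matrix.trace (A * qmat (B s (e2 c)))) hg'
      simpa [Finset.sum_mul, Matrix.smul_mul, Matrix.trace_sum, Matrix.trace_smul,
        smul_eq_mul, Matrix.zero_mul, Matrix.trace_zero] using h1
    have E' : ∀ (s : Fin M) (c : Fin 2),
        g (s, c) - (3:ℂ)⁻¹ * (g (s, 0) + g (s, 1)) = 0 := by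
      intro s c
      have h1 := E s c
      rw [Fintype.sum_prod_type] at h1
      rw [Finset.sum_eq_single s ?hne ?hmem] at h1
      case hne =>
        intro t _ hts
        apply Finset.sum_eq_zero
        intro a _
        rw [hQQ t s (e2 a) (e2 c), if_neg hts]
        ring
      case hmem => intro h; exact absurd (Finset.mem_univ s) h
      rw [Fin.sum_univ_two, hQQ s s (e2 0) (e2 c), hQQ s s (e2 1) (e2 c),
        if_pos rfl, if_pos rfl] at h1
      have hcc0 : (e2 0 = e2 c) ↔ ((0:Fin 2) = c) :=
        ⟨fun h => he2inj _ _ h, fun h => by rw [h]⟩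
      have hcc1 : (e2 1 = e2 c) ↔ ((1:Fin 2) = c) :=
        ⟨fun h => he2inj _ _ h, fun h => by rw [h]⟩
      rw [if_congr hcc0 rfl rfl, if_congr hcc1 rfl rfl] at h1
      have hcase : c = 0 ∨ c = 1 := by
        rcases c with ⟨cv, hcv⟩
        match cv, hcv with
        | 0, _ => exact Or.inl (Fin.ext rfl)
        | 1, _ => exact Or.inr (Fin.ext rfl)
      rcases hcase with hc | hc <;> subst hc
      · rw [if_pos rfl, if_neg (by decide : ¬((1:Fin 2) = 0))] at h1
        linear_combination h1
      · rw [if_pos rfl, if_neg (by decide : ¬((0:Fin 2) = 1))] at h1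
        linear_combination h1
    intro p
    obtain ⟨s, b⟩ := p
    have h0 := E' s 0
    have h1 := E' s 1
    have hcase : b = 0 ∨ b = 1 := by
      rcases b with ⟨bv, hbv⟩
      match bv, hbv with
      | 0, _ => exact Or.inl (Fin.ext rfl)
      | 1, _ => exact Or.inr (Fin.ext rfl)
    rcases hcase with hb | hb <;> subst hb
    · linear_combination (2:ℂ) * h0 + h1
    · linear_combination h0 + (2:ℂ) * h1
  have hcard := hli.fintype_card_le_finrank
  rw [ker_trace_finrank] at hcard
  simp only [Fintype.card_prod, Fintype.card_fin] at hcard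
  omega

/-! ### Part 1: the upper bound 3 -/

lemma entries_abs_one (A : Matrix (Fin 3) (Fin 3) ℂ) (h : IsUnitWeighing 3 A) :
    ∀ a b, A a b * (starRingEnd ℂ) (A a b) = 1 := by
  obtain ⟨h1, h2⟩ := h
  intro a b
  have hr : (A * Aᴴ) a a = (((3:ℕ):ℂ) • (1 : Matrix (Fin 3) (Fin 3) ℂ)) a a := by rw [h2]
  simp only [Matrix.mul_apply, Matrix.conjTranspose_apply, Fin.sum_univ_three,
    Matrix.smul_apply, Matrix.one_apply_eq, smul_eq_mul, mul_one, Complex.star_def,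
    Complex.mul_conj] at hr
  have hr' : Complex.normSq (A a 0) + Complex.normSq (A a 1) + Complex.normSq (A a 2) = 3 := by
    exact_mod_cast hr
  have hb : ∀ j, Complex.normSq (A a j) ≤ 1 := by
    intro j
    rcases h1 a j with h | h
    · simp [h]
    · have : Complex.normSq (A a j) = 1 := by
        rw [← Complex.sq_norm, h]; norm_num
      rw [this]
  have hval : Complex.normSq (A a b) = 1 := by
    have h0 := hb 0; have h1' := hb 1; have h2' := hb 2
    fin_cases b
    · show Complex.normSq (A a 0) = 1; linarith
    · show Complex.normSq (A a 1) = 1; linarith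
    · show Complex.normSq (A a 2) = 1; linarith
  rw [Complex.mul_conj, hval]
  norm_num

theorem stmt_10 :
    (∀ (m : ℕ) (W : Fin m → Matrix (Fin 3) (Fin 3) ℂ),
      (∀ i, IsUnitWeighing 3 (W i)) →
      (∀ i j, i ≠ j → Unbiased 3 (W i) (W j)) → m ≤ 3) ∧
    (∃ H : Fin 3 → Matrix (Fin 3) (Fin 3) ℂ,
      (∀ t i j, (H t) i j ^ 3 = 1) ∧
      (∀ t, IsUnitWeighing 3 (H t)) ∧
      (∀ s t, s ≠ t → Unbiased 3 (H s) (H t))) := by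
  constructor
  · -- upper bound
    intro m W hW hU
    classical
    set c : ℂ := ((Real.sqrt 3 : ℝ) : ℂ) with hc
    have hcc : (starRingEnd ℂ) c = c := by rw [hc, Complex.conj_ofReal]
    have hc2 : c * c = 3 := sqrt3_sq
    -- the W-matrix row equations
    have hWentry : ∀ (i : Fin m) (a b : Fin 3),
        ∑ j, W i a j * (starRingEnd ℂ) (W i b j) = if a = b then 3 else 0 := by
      intro i a b
      have h := (hW i).2
      have h2 := congrFun (congrFun h a) b
      simp only [Matrix.mul_apply, Matrix.conjTranspose_apply, Fin.sum_univ_three,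
        Matrix.smul_apply, Matrix.one_apply, smul_eq_mul, Complex.star_def] at h2
      rw [Fin.sum_univ_three]
      rw [h2]
      split_ifs <;> norm_num
    have hent : ∀ (i : Fin m) (a b : Fin 3), W i a b * (starRingEnd ℂ) (W i a b) = 1 :=
      fun i => entries_abs_one (W i) (hW i)
    have hcross : ∀ (i j : Fin m), i ≠ j → ∀ a b,
        ((W i * (W j)ᴴ) a b) * (starRingEnd ℂ) ((W i * (W j)ᴴ) a b) = 3 := by
      intro i j hij a b
      obtain ⟨L, hL, heq⟩ := hU i j hij
      have hLe : ∀ a b, L a b * (starRingEnd ℂ) (L a b) = 1 := entries_abs_one L hL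
      have hcast : ((Real.sqrt ((3:ℕ):ℝ) : ℝ) : ℂ) = c := by rw [hc]; norm_num
      have he : (W i * (W j)ᴴ) a b = c * L a b := by
        rw [heq, Matrix.smul_apply, smul_eq_mul, hcast]
      rw [he, _root_.map_mul, hcc]
      linear_combination (c * c) * (hLe a b) + hc2
    -- build the m+1 bases
    set B : Fin (m+1) → Fin 3 → Fin 3 → ℂ := fun t a j =>
      if h : (t : ℕ) < m then W ⟨t.val, h⟩ a j else (if a = j then c else 0) with hB
    have horth : ∀ t a b, (∑ j, B t a j * (starRingEnd ℂ) (B t b j)) =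
        if a = b then 3 else 0 := by
      intro t a b
      by_cases h : (t : ℕ) < m
      · simp only [hB, dif_pos h]
        exact hWentry ⟨t.val, h⟩ a b
      · simp only [hB, dif_neg h]
        fin_cases a <;> fin_cases b <;>
          simp [Fin.sum_univ_three, hcc] <;>
          first | exact hc2 | norm_num
    have hunb : ∀ s t a b, s ≠ t →
        (∑ j, B s a j * (starRingEnd ℂ) (B t b j)) *
        (∑ j, (starRingEnd ℂ) (B s a j) * (B t b j)) = 3 := by
      intro s t a b hst
      by_cases hs : (s : ℕ) < m <;> by_cases ht : (t : ℕ) < m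
      · -- both Hadamard rows
        have hij : (⟨s.val, hs⟩ : Fin m) ≠ ⟨t.val, ht⟩ := by
          intro h
          apply hst
          apply Fin.ext
          simpa [Fin.ext_iff] using h
        have h := hcross ⟨s.val, hs⟩ ⟨t.val, ht⟩ hij a b
        simp only [Matrix.mul_apply, Matrix.conjTranspose_apply, Fin.sum_univ_three,
          map_add, _root_.map_mul, Complex.conj_conj, Complex.star_def] at h
        simp only [hB, dif_pos hs, dif_pos ht, Fin.sum_univ_three]
        linear_combination h
      · -- s Hadamard, t standard
        have h1 : (∑ j, B s a j * (starRingEnd ℂ) (B t b j)) = W ⟨s.val, hs⟩ a b * c := by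
          simp only [hB, dif_pos hs, dif_neg ht, Fin.sum_univ_three]
          fin_cases b <;> simp [hcc]
        have h2 : (∑ j, (starRingEnd ℂ) (B s a j) * (B t b j)) =
            (starRingEnd ℂ) (W ⟨s.val, hs⟩ a b) * c := by
          simp only [hB, dif_pos hs, dif_neg ht, Fin.sum_univ_three]
          fin_cases b <;> simp [hcc]
        rw [h1, h2]
        linear_combination (c * c) * (hent ⟨s.val, hs⟩ a b) + hc2
      · -- s standard, t Hadamard
        have h1 : (∑ j, B s a j * (starRingEnd ℂ) (B t b j)) =
            c * (starRingEnd ℂ) (W ⟨t.val, ht⟩ b a) := by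
          simp only [hB, dif_neg hs, dif_pos ht, Fin.sum_univ_three]
          fin_cases a <;> simp [hcc]
        have h2 : (∑ j, (starRingEnd ℂ) (B s a j) * (B t b j)) =
            c * W ⟨t.val, ht⟩ b a := by
          simp only [hB, dif_neg hs, dif_pos ht, Fin.sum_univ_three]
          fin_cases a <;> simp [hcc]
        rw [h1, h2]
        linear_combination (c * c) * (hent ⟨t.val, ht⟩ b a) + hc2
      · -- both standard: impossible
        exfalso
        apply hst
        apply Fin.ext
        omega
    have := mub_bound (m+1) B horth hunb
    omega
  · -- existence
    refine ⟨Hm, ?_, unit_weighing_Hm, unbiased_Hm⟩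
    intro t i j
    show (om ^ ((t.val * j.val * j.val + i.val * j.val) % 3)) ^ 3 = 1
    rw [← pow_mul, mul_comm, pow_mul, om3, one_pow]
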